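/- arXiv:math/0010297 — 3 statements merged into one kernel-verified Lean document; each statement's English description precedes it below -/
import Mathlib

section
/- Let f : ℝ₋ⁿ → ℝ be an indicator profile and let L = {t ∈ ℝ₋ⁿ : f(t) = −1}. For every compact subset F of L, the set Θ_F coincides with the gradient image of F for the function f₋₁ = max(f, −1); that is, Θ_F = ⋃_{t⁰ ∈ F} { a ∈ ℝⁿ : f₋₁(t) ≥ f₋₁(t⁰) + ⟨a, t − t⁰⟩ for all t ∈ ℝ₋ⁿ }. (This is Proposition 2 of the paper, stated in the logarithmic coordinates in which an indicator weight Φ becomes the convex function f(t) = Φ(e^{t₁},…,e^{tₙ}).) -/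
open Set

/-- The negative orthant `ℝ₋ⁿ = (−∞,0)ⁿ`. -/
def negOrth (n : ℕ) : Set (Fin n → ℝ) := {t | ∀ i, t i < 0}

/-- The standard inner product `⟨a, t⟩ = ∑ aᵢ tᵢ` on `ℝⁿ`. -/
def dotp {n : ℕ} (a t : Fin n → ℝ) : ℝ := ∑ i, a i * t i

/-- An indicator profile: convex, nonpositive, nondecreasing in each variable,
and positively homogeneous on the negative orthant. -/
def IsIndicatorProfile {n : ℕ} (f : (Fin n → ℝ) → ℝ) : Prop :=
  ConvexOn ℝ (negOrth n) f ∧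
  (∀ t ∈ negOrth n, f t ≤ 0) ∧
  (∀ s ∈ negOrth n, ∀ t ∈ negOrth n, (∀ i, s i ≤ t i) → f s ≤ f t) ∧
  (∀ c : ℝ, 0 < c → ∀ t ∈ negOrth n, f (c • t) = c * f t)

/-- The level set `L = {t ∈ ℝ₋ⁿ : f(t) = −1}`. -/
def levelL {n : ℕ} (f : (Fin n → ℝ) → ℝ) : Set (Fin n → ℝ) :=
  {t ∈ negOrth n | f t = -1}

/-- `Γ_F = {a ∈ ℝ₊ⁿ : sup_{t∈F} ⟨a,t⟩ = sup_{t∈L} ⟨a,t⟩ = −1}`. -/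
def GammaSet {n : ℕ} (f : (Fin n → ℝ) → ℝ) (F : Set (Fin n → ℝ)) :
    Set (Fin n → ℝ) :=
  {a | (∀ i, 0 ≤ a i) ∧ sSup ((fun t => dotp a t) '' F) = -1 ∧
    sSup ((fun t => dotp a t) '' levelL f) = -1}

/-- `Θ_F = {λa : 0 ≤ λ ≤ 1, a ∈ Γ_F}`. -/
def ThetaSet {n : ℕ} (f : (Fin n → ℝ) → ℝ) (F : Set (Fin n → ℝ)) :
    Set (Fin n → ℝ) :=
  {x | ∃ l : ℝ, 0 ≤ l ∧ l ≤ 1 ∧ ∃ a ∈ GammaSet f F, x = l • a}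

/-- The gradient image `ω(F, v)` of a set `F` for a function `v` on `ℝ₋ⁿ`. -/
def gradImage {n : ℕ} (v : (Fin n → ℝ) → ℝ) (F : Set (Fin n → ℝ)) :
    Set (Fin n → ℝ) :=
  ⋃ t0 ∈ F, {a | ∀ t ∈ negOrth n, v t0 + dotp a (t - t0) ≤ v t}

/-! ### Auxiliary lemmas -/

lemma dotp_smul_right {n : ℕ} (a t : Fin n → ℝ) (c : ℝ) :
    dotp a (c • t) = c * dotp a t := by
  simp only [dotp, Pi.smul_apply, smul_eq_mul, Finset.mul_sum]
  exact Finset.sum_congr rfl fun i _ => by ring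

lemma dotp_smul_left {n : ℕ} (a t : Fin n → ℝ) (c : ℝ) :
    dotp (c • a) t = c * dotp a t := by
  simp only [dotp, Pi.smul_apply, smul_eq_mul, Finset.mul_sum]
  exact Finset.sum_congr rfl fun i _ => by ring

lemma dotp_sub {n : ℕ} (a t s : Fin n → ℝ) :
    dotp a (t - s) = dotp a t - dotp a s := by
  simp only [dotp, Pi.sub_apply, ← Finset.sum_sub_distrib]
  exact Finset.sum_congr rfl fun i _ => by ring

lemma dotp_nonpos {n : ℕ} {a t : Fin n → ℝ} (ha : ∀ i, 0 ≤ a i)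
    (ht : ∀ i, t i < 0) : dotp a t ≤ 0 :=
  Finset.sum_nonpos fun i _ => mul_nonpos_of_nonneg_of_nonpos (ha i) (ht i).le

lemma dotp_single {n : ℕ} (a : Fin n → ℝ) (i : Fin n) :
    dotp a (Pi.single i 1) = a i := by
  simp [dotp, Pi.single_apply, mul_ite, Finset.sum_ite_eq']

lemma isOpen_negOrth (n : ℕ) : IsOpen (negOrth n) := by
  have : negOrth n = ⋂ i, (fun t : Fin n → ℝ => t i) ⁻¹' Iio 0 := by
    ext t; simp [negOrth]
  rw [this]
  exact isOpen_iInter_of_finite fun i => isOpen_Iio.preimage (continuous_apply i)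

lemma smul_mem_negOrth {n : ℕ} {t : Fin n → ℝ} (ht : t ∈ negOrth n) {c : ℝ}
    (hc : 0 < c) : c • t ∈ negOrth n := fun i =>
  mul_neg_of_pos_of_neg hc (ht i)

lemma continuous_dotp {n : ℕ} (a : Fin n → ℝ) :
    Continuous fun t : Fin n → ℝ => dotp a t := by
  unfold dotp
  exact continuous_finset_sum _ fun i _ => continuous_const.mul (continuous_apply i)

/-- sSup of dotp-image equals -1 when attained at a point and -1 is an upper bound. -/
lemma sSup_image_eq_neg_one {n : ℕ} {a : Fin n → ℝ} {S : Set (Fin n → ℝ)}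
    {t0 : Fin n → ℝ} (ht0 : t0 ∈ S) (h0 : dotp a t0 = -1)
    (hub : ∀ t ∈ S, dotp a t ≤ -1) :
    sSup ((fun t => dotp a t) '' S) = -1 := by
  apply le_antisymm
  · exact csSup_le ⟨_, mem_image_of_mem _ ht0⟩ (by rintro x ⟨t, ht, rfl⟩; exact hub t ht)
  · refine le_csSup ⟨-1, ?_⟩ ?_
    · rintro x ⟨t, ht, rfl⟩; exact hub t ht
    · exact ⟨t0, ht0, h0⟩

lemma ub_of_sSup_eq {S : Set ℝ} (h : sSup S = -1) : ∀ x ∈ S, x ≤ -1 := by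
  intro x hx
  by_cases hb : BddAbove S
  · calc x ≤ sSup S := le_csSup hb hx
      _ = -1 := h
  · rw [Real.sSup_of_not_bddAbove hb] at h; norm_num at h

/-- Existence of a subgradient of a convex function at a point of the open
negative orthant. -/
lemma exists_subgradient {n : ℕ} {f : (Fin n → ℝ) → ℝ}
    (hconv : ConvexOn ℝ (negOrth n) f) {t0 : Fin n → ℝ} (ht0 : t0 ∈ negOrth n) :
    ∃ a : Fin n → ℝ, ∀ t ∈ negOrth n, f t0 + dotp a (t - t0) ≤ f t := by
  set S : Set ((Fin n → ℝ) × ℝ) := {p | p.1 ∈ negOrth n ∧ f p.1 < p.2} with hS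
  have hSconv : Convex ℝ S := hconv.convex_strict_epigraph
  have hcont : ContinuousOn f (negOrth n) := hconv.continuousOn (isOpen_negOrth n)
  have hSopen : IsOpen S := by
    have h1 : IsOpen ((negOrth n) ×ˢ (univ : Set ℝ)) :=
      (isOpen_negOrth n).prod isOpen_univ
    have h2 : ContinuousOn (fun p : (Fin n → ℝ) × ℝ => f p.1 - p.2)
        ((negOrth n) ×ˢ (univ : Set ℝ)) := by
      apply ContinuousOn.sub
      · exact hcont.comp continuous_fst.continuousOn fun p hp => hp.1
      · exact continuous_snd.continuousOn
    have h3 := h2.isOpen_inter_preimage h1 isOpen_Iio (t := Iio 0)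
    convert h3 using 1
    ext p
    simp only [hS, mem_setOf_eq, mem_inter_iff, mem_prod, mem_univ, and_true,
      mem_preimage, mem_Iio, sub_neg]
  have hpt : ((t0, f t0) : (Fin n → ℝ) × ℝ) ∉ S := by
    simp [hS]
  obtain ⟨l, hl⟩ := geometric_hahn_banach_open_point hSconv hSopen hpt
  set β : ℝ := l (0, 1) with hβ
  have hβneg : β < 0 := by
    have hmem : ((t0, f t0 + 1) : (Fin n → ℝ) × ℝ) ∈ S := by
      refine ⟨ht0, ?_⟩
      show f t0 < f t0 + 1
      linarith
    have h := hl (t0, f t0 + 1) hmem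
    have : ((t0, f t0 + 1) : (Fin n → ℝ) × ℝ) = (t0, f t0) + (0, 1) := by
      simp [Prod.ext_iff]
    rw [this, map_add] at h
    linarith
  set b : Fin n → ℝ := fun i => l (Pi.single i (1:ℝ), 0) with hb
  have hsplit : ∀ (t : Fin n → ℝ) (y : ℝ), l (t, y) = dotp b t + y * β := by
    intro t y
    have h1 : ((t, y) : (Fin n → ℝ) × ℝ) = (t, 0) + y • ((0 : Fin n → ℝ), (1 : ℝ)) := by
      simp [Prod.ext_iff]
    rw [h1, map_add, map_smul]
    have h2 : l (t, 0) = dotp b t := by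
      have h3 := LinearMap.pi_apply_eq_sum_univ
        ((l.toLinearMap).comp (LinearMap.inl ℝ (Fin n → ℝ) ℝ)) t
      simp only [LinearMap.coe_comp, Function.comp_apply, LinearMap.coe_inl,
        ContinuousLinearMap.coe_coe] at h3
      rw [h3]
      unfold dotp
      refine Finset.sum_congr rfl fun i _ => ?_
      have hps : (fun j => if i = j then (1:ℝ) else 0) = Pi.single i 1 := by
        ext j
        rw [Pi.single_apply]
        simp [eq_comm]
      rw [hps, smul_eq_mul, mul_comm]
    rw [h2, smul_eq_mul]
  -- key inequality
  have key : ∀ t ∈ negOrth n, dotp b t + f t * β ≤ dotp b t0 + f t0 * β := by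
    intro t ht
    by_contra hcon
    push_neg at hcon
    set D : ℝ := (dotp b t + f t * β) - (dotp b t0 + f t0 * β) with hD
    have hDpos : 0 < D := by rw [hD]; linarith
    have hβ' : (0:ℝ) < -β := by linarith
    have hε : 0 < D / (2 * (-β)) := div_pos hDpos (by linarith)
    have hmem : ((t, f t + D / (2 * (-β))) : (Fin n → ℝ) × ℝ) ∈ S := by
      refine ⟨ht, ?_⟩
      show f t < f t + D / (2 * (-β))
      linarith
    have h := hl (t, f t + D / (2 * (-β))) hmem
    rw [hsplit, hsplit] at h
    have hβ0 : β ≠ 0 := ne_of_lt hβneg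
    have hexp : (f t + D / (2 * (-β))) * β = f t * β - D / 2 := by
      field_simp
      ring
    rw [hexp] at h
    linarith
  refine ⟨(-β)⁻¹ • b, fun t ht => ?_⟩
  have h := key t ht
  have hβ' : (0:ℝ) < -β := by linarith
  rw [dotp_sub, dotp_smul_left, dotp_smul_left]
  have h2 : (-β)⁻¹ * (dotp b t - dotp b t0) ≤ f t - f t0 := by
    rw [inv_mul_le_iff₀ hβ']
    nlinarith [h]
  linarith

/-- `GammaSet` is nonempty whenever `F` has a point. -/
lemma gammaSet_nonempty {n : ℕ} {f : (Fin n → ℝ) → ℝ} (hf : IsIndicatorProfile f)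
    {F : Set (Fin n → ℝ)} (hFL : F ⊆ levelL f) {t0 : Fin n → ℝ} (ht0 : t0 ∈ F) :
    ∃ a, a ∈ GammaSet f F := by
  obtain ⟨hconv, hnonpos, hmono, hhomog⟩ := hf
  have ht0L : t0 ∈ levelL f := hFL ht0
  have ht0neg : t0 ∈ negOrth n := ht0L.1
  have hft0 : f t0 = -1 := ht0L.2
  obtain ⟨a, hsub⟩ := exists_subgradient hconv ht0neg
  -- dotp a t0 = -1
  have h2 : dotp a t0 ≤ -1 := by
    have hmem : (2 : ℝ) • t0 ∈ negOrth n := smul_mem_negOrth ht0neg (by norm_num)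
    have h := hsub _ hmem
    have heq : (2 : ℝ) • t0 - t0 = t0 := by
      funext j; simp; ring
    rw [heq, hhomog 2 (by norm_num) t0 ht0neg, hft0] at h
    linarith
  have h3 : -1 ≤ dotp a t0 := by
    have hmem : (2⁻¹ : ℝ) • t0 ∈ negOrth n := smul_mem_negOrth ht0neg (by norm_num)
    have h := hsub _ hmem
    have heq : (2⁻¹ : ℝ) • t0 - t0 = (-(2⁻¹) : ℝ) • t0 := by
      funext j; simp; ring
    rw [heq, dotp_smul_right, hhomog 2⁻¹ (by norm_num) t0 ht0neg, hft0] at h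
    linarith
  have hat0 : dotp a t0 = -1 := le_antisymm h2 h3
  -- a is nonnegative
  have ha0 : ∀ i, 0 ≤ a i := by
    intro i
    set e : Fin n → ℝ := Pi.single i 1 with he
    set t : Fin n → ℝ := t0 - e with ht
    have he0 : ∀ j, 0 ≤ e j := by
      intro j
      rw [he, Pi.single_apply]
      split <;> norm_num
    have htneg : t ∈ negOrth n := by
      intro j
      have ht0j := ht0neg j
      have := he0 j
      simp only [ht, Pi.sub_apply]
      linarith
    have hle : f t ≤ f t0 := by
      apply hmono t htneg t0 ht0neg
      intro j
      have := he0 j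
      simp only [ht, Pi.sub_apply]
      linarith
    have h := hsub t htneg
    have heq : t - t0 = -e := by
      funext j; simp [ht]
    rw [heq] at h
    have hdn : dotp a (-e) = -(a i) := by
      have h9 : -e = (0 : Fin n → ℝ) - e := by simp
      rw [h9, dotp_sub, he, dotp_single]
      simp [dotp]
    rw [hdn] at h
    linarith
  -- dotp a ≤ f on negOrth
  have hle : ∀ t ∈ negOrth n, dotp a t ≤ f t := by
    intro t htneg
    have h := hsub t htneg
    rw [dotp_sub, hat0, hft0] at h
    linarith
  have hubL : ∀ t ∈ levelL f, dotp a t ≤ -1 := fun t htL => by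
    have := hle t htL.1; rw [htL.2] at this; exact this
  refine ⟨a, ha0, ?_, ?_⟩
  · exact sSup_image_eq_neg_one ht0 hat0 fun t htF => hubL t (hFL htF)
  · exact sSup_image_eq_neg_one ht0L hat0 hubL

/-- For `a ∈ GammaSet f F`, `⟨a,t⟩ ≤ f t` on the negative orthant. -/
lemma dotp_le_f {n : ℕ} {f : (Fin n → ℝ) → ℝ} (hf : IsIndicatorProfile f)
    {F : Set (Fin n → ℝ)} {a : Fin n → ℝ} (ha : a ∈ GammaSet f F) :
    ∀ t ∈ negOrth n, dotp a t ≤ f t := by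
  obtain ⟨hconv, hnonpos, hmono, hhomog⟩ := hf
  obtain ⟨ha0, _, haL⟩ := ha
  have hubL : ∀ t ∈ levelL f, dotp a t ≤ -1 := by
    intro t htL
    exact ub_of_sSup_eq haL _ ⟨t, htL, rfl⟩
  intro t htneg
  rcases eq_or_lt_of_le (hnonpos t htneg) with h0 | hlt
  · rw [h0]
    exact dotp_nonpos ha0 htneg
  · have hft : f t ≠ 0 := ne_of_lt hlt
    set c : ℝ := (-(f t))⁻¹ with hc
    have hcpos : 0 < c := by
      rw [hc]
      exact inv_pos.mpr (by linarith)
    have hcf : c * f t = -1 := by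
      rw [hc, inv_neg, neg_mul, inv_mul_cancel₀ hft]
    have hmem : c • t ∈ negOrth n := smul_mem_negOrth htneg hcpos
    have hfc : f (c • t) = -1 := by
      rw [hhomog c hcpos t htneg]
      exact hcf
    have h := hubL (c • t) ⟨hmem, hfc⟩
    rw [dotp_smul_right] at h
    have h2 : c * dotp a t ≤ c * f t := by rw [hcf]; exact h
    exact le_of_mul_le_mul_left h2 hcpos

/-- Proposition 2: for a compact subset `F` of `L`, the set `Θ_F` coincides with
the gradient image of `F` for the function `f₋₁ = max(f, −1)`. -/
theorem theta_eq_gradImage (n : ℕ) (hn : 1 ≤ n) (f : (Fin n → ℝ) → ℝ)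
    (hf : IsIndicatorProfile f) (F : Set (Fin n → ℝ))
    (hFL : F ⊆ levelL f) (hFc : IsCompact F) :
    ThetaSet f F = gradImage (fun t => max (f t) (-1)) F := by
  obtain ⟨hconv, hnonpos, hmono, hhomog⟩ := hf
  have hf' : IsIndicatorProfile f := ⟨hconv, hnonpos, hmono, hhomog⟩
  ext x
  constructor
  · rintro ⟨l, hl0, hl1, a, haG, rfl⟩
    obtain ⟨ha0, haF, haL⟩ := haG
    -- the image of F is nonempty
    have hne : ((fun t => dotp a t) '' F).Nonempty := by
      by_contra h
      rw [not_nonempty_iff_eq_empty] at h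
      rw [h, Real.sSup_empty] at haF
      norm_num at haF
    have himc : IsCompact ((fun t => dotp a t) '' F) := hFc.image (continuous_dotp a)
    have hmem : sSup ((fun t => dotp a t) '' F) ∈ (fun t => dotp a t) '' F :=
      himc.sSup_mem hne
    rw [haF] at hmem
    obtain ⟨t0, ht0F, ht0eq0⟩ := hmem
    have ht0eq : dotp a t0 = -1 := ht0eq0
    have ht0L := hFL ht0F
    have hB := dotp_le_f hf' ⟨ha0, haF, haL⟩
    simp only [gradImage, mem_iUnion, mem_setOf_eq]
    refine ⟨t0, ht0F, fun t ht => ?_⟩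
    have hft0 : f t0 = -1 := ht0L.2
    rw [hft0]
    rw [dotp_sub, dotp_smul_left, dotp_smul_left, ht0eq]
    have h1 : dotp a t ≤ f t := hB t ht
    have h2 : f t ≤ max (f t) (-1) := le_max_left _ _
    have h3 : (-1 : ℝ) ≤ max (f t) (-1) := le_max_right _ _
    rw [max_self]
    rcases le_or_gt (dotp a t + 1) 0 with hc | hc
    · nlinarith
    · nlinarith
  · intro hx
    simp only [gradImage, mem_iUnion, mem_setOf_eq] at hx
    obtain ⟨t0, ht0F, hsub⟩ := hx
    have ht0L := hFL ht0F
    have ht0neg : t0 ∈ negOrth n := ht0L.1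
    have hft0 : f t0 = -1 := ht0L.2
    rw [hft0, max_self] at hsub
    -- x is nonnegative
    have hx0 : ∀ i, 0 ≤ x i := by
      intro i
      set e : Fin n → ℝ := Pi.single i 1 with he
      set t : Fin n → ℝ := t0 - e with ht
      have he0 : ∀ j, 0 ≤ e j := by
        intro j
        rw [he, Pi.single_apply]
        split <;> norm_num
      have htneg : t ∈ negOrth n := by
        intro j
        have ht0j := ht0neg j
        have := he0 j
        simp only [ht, Pi.sub_apply]
        linarith
      have hfle : f t ≤ f t0 := by
        apply hmono t htneg t0 ht0neg
        intro j
        have := he0 j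
        simp only [ht, Pi.sub_apply]
        linarith
      have hmax : max (f t) (-1) = -1 := by
        rw [max_eq_right]; rw [hft0] at hfle; exact hfle
      have h := hsub t htneg
      rw [hmax] at h
      have heq : t - t0 = -e := by
        funext j; simp [ht]
      rw [heq] at h
      have hdn : dotp x (-e) = -(x i) := by
        have h9 : -e = (0 : Fin n → ℝ) - e := by simp
        rw [h9, dotp_sub, he, dotp_single]
        simp [dotp]
      rw [hdn] at h
      linarith
    have hd0 : dotp x t0 ≤ 0 := dotp_nonpos hx0 ht0neg
    have hd1 : -1 ≤ dotp x t0 := by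
      have hmem : (2⁻¹ : ℝ) • t0 ∈ negOrth n := smul_mem_negOrth ht0neg (by norm_num)
      have h := hsub _ hmem
      have heq : (2⁻¹ : ℝ) • t0 - t0 = (-(2⁻¹) : ℝ) • t0 := by
        funext j; simp; ring
      have hfc : f ((2⁻¹ : ℝ) • t0) = -(2⁻¹) := by
        rw [hhomog 2⁻¹ (by norm_num) t0 ht0neg, hft0]; ring
      have hmax : max (f ((2⁻¹ : ℝ) • t0)) (-1) = -(2⁻¹) := by
        rw [hfc, max_eq_left]; norm_num
      rw [heq, dotp_smul_right, hmax] at h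
      linarith
    by_cases hxz : dotp x t0 = 0
    · -- x = 0
      have hxeq : x = 0 := by
        funext i
        have hterms : ∀ j ∈ Finset.univ, x j * t0 j ≤ 0 := fun j _ =>
          mul_nonpos_of_nonneg_of_nonpos (hx0 j) (ht0neg j).le
        have := (Finset.sum_eq_zero_iff_of_nonpos hterms).mp hxz i (Finset.mem_univ i)
        rcases mul_eq_zero.mp this with h | h
        · exact h
        · exact absurd h (ht0neg i).ne
      obtain ⟨b, hb⟩ := gammaSet_nonempty hf' hFL ht0F
      exact ⟨0, le_rfl, zero_le_one, b, hb, by rw [zero_smul]; exact hxeq⟩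
    · set lam : ℝ := -(dotp x t0) with hlam
      have hlampos : 0 < lam := by
        rcases lt_or_eq_of_le hd0 with h | h
        · rw [hlam]; linarith
        · exact absurd h hxz
      set b : Fin n → ℝ := lam⁻¹ • x with hb
      have hub : ∀ t ∈ levelL f, dotp x t ≤ dotp x t0 := by
        intro t htL
        have h := hsub t htL.1
        have hmax : max (f t) (-1) = -1 := by rw [htL.2, max_self]
        rw [hmax, dotp_sub] at h
        linarith
      have hxlam : dotp x t0 = -lam := by rw [hlam]; ring
      have hbt0 : dotp b t0 = -1 := by
        rw [hb, dotp_smul_left, hxlam, mul_neg, inv_mul_cancel₀ hlampos.ne']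
      have hubb : ∀ t ∈ levelL f, dotp b t ≤ -1 := by
        intro t htL
        rw [hb, dotp_smul_left]
        have h := hub t htL
        calc lam⁻¹ * dotp x t ≤ lam⁻¹ * dotp x t0 := by
              apply mul_le_mul_of_nonneg_left h (le_of_lt (inv_pos.mpr hlampos))
          _ = -1 := by rw [hxlam, mul_neg, inv_mul_cancel₀ hlampos.ne']
      have hbG : b ∈ GammaSet f F := by
        refine ⟨fun i => mul_nonneg (inv_pos.mpr hlampos).le (hx0 i), ?_, ?_⟩
        · exact sSup_image_eq_neg_one ht0F hbt0 fun t htF => hubb t (hFL htF)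
        · exact sSup_image_eq_neg_one ht0L hbt0 hubb
      refine ⟨lam, hlampos.le, by linarith [hd1], b, hbG, ?_⟩
      rw [hb, smul_smul, mul_inv_cancel₀ hlampos.ne', one_smul]
end

section
/- Let h : ℝ₋ⁿ → [−∞, ∞) be convex, nondecreasing in each variable, and nonpositive. Assume that for every index k ∈ {1,…,n} and every τ ∈ (−∞, 0), inf{ h(t) : t ∈ ℝ₋ⁿ, t_k = τ } > −∞. Then for every T < 0 there exists a constant A > 0 such that h(t) ≥ A·max_{1≤k≤n} t_k for all t ∈ ℝ₋ⁿ with t_k ≤ T for every k. (This is the convex-analytic form of Lemma 1 of the paper: a nonpositive multicircled plurisubharmonic function v on the unit polydisk corresponds to such an h via h(t) = v(e^{t₁},…,e^{tₙ}), and the hypothesis corresponds to the restriction of v to each coordinate line through 0 not being identically −∞; the conclusion reads v(z) ≥ A·sup_j log|z_j| for |z_k| ≤ e^T.) -/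
open Set

/-- Lemma 1 (convex-analytic form): let `h : ℝ₋ⁿ → [−∞,∞)` be convex,
nondecreasing in each variable and nonpositive, and suppose that for every
coordinate `k` and every `τ < 0` the infimum of `h` over the slice
`{t ∈ ℝ₋ⁿ : t_k = τ}` is finite. Then for every `T < 0` there is `A > 0` with
`h(t) ≥ A · max_k t_k` whenever `t ∈ ℝ₋ⁿ` satisfies `t_k ≤ T` for all `k`. -/
theorem lemma1_convex_form (n : ℕ) (hn : 1 ≤ n) (h : (Fin n → ℝ) → EReal)
    (hconv : ∀ s ∈ negOrth n, ∀ t ∈ negOrth n, ∀ p q : ℝ,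
      0 ≤ p → 0 ≤ q → p + q = 1 →
        h (p • s + q • t) ≤ (p : EReal) * h s + (q : EReal) * h t)
    (hmono : ∀ s ∈ negOrth n, ∀ t ∈ negOrth n, (∀ i, s i ≤ t i) → h s ≤ h t)
    (hnonpos : ∀ t ∈ negOrth n, h t ≤ 0)
    (hslice : ∀ k : Fin n, ∀ τ : ℝ, τ < 0 →
        sInf (h '' {t ∈ negOrth n | t k = τ}) ≠ ⊥) :
    ∀ T : ℝ, T < 0 → ∃ A : ℝ, 0 < A ∧
      ∀ t ∈ negOrth n, (∀ k, t k ≤ T) →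
        ((A * ⨆ i, t i : ℝ) : EReal) ≤ h t := by
  intro T hT
  have hFin : Nonempty (Fin n) := ⟨⟨0, hn⟩⟩
  -- constant point
  have hcneg : (fun _ : Fin n => T) ∈ negOrth n := fun _ => hT
  set m : Fin n → EReal := fun k => sInf (h '' {t ∈ negOrth n | t k = T}) with hm
  have hmbot : ∀ k, m k ≠ ⊥ := fun k => hslice k T hT
  have hmle : ∀ k, m k ≤ 0 := by
    intro k
    calc m k ≤ h (fun _ => T) := sInf_le ⟨(fun _ => T), ⟨hcneg, rfl⟩, rfl⟩
    _ ≤ 0 := hnonpos _ hcneg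
  have hmtop : ∀ k, m k ≠ ⊤ := fun k => ne_top_of_le_ne_top (by simp) (hmle k)
  set B : Fin n → ℝ := fun k => (m k).toReal with hBdef
  have hB0 : ∀ k, B k ≤ 0 := by
    intro k
    have := EReal.coe_toReal (hmtop k) (hmbot k)
    have h2 : ((B k : ℝ) : EReal) ≤ ((0 : ℝ) : EReal) := by
      rw [hBdef]; simp only []
      rw [this]; exact le_trans (hmle k) (by norm_num)
    exact_mod_cast h2
  set A : ℝ := 1 + ∑ k, 2 * B k / T with hA
  have hterm : ∀ k, 0 ≤ 2 * B k / T := by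
    intro k
    rw [div_nonneg_iff]
    right
    exact ⟨by linarith [hB0 k], hT.le⟩
  have hsum : 0 ≤ ∑ k, 2 * B k / T := Finset.sum_nonneg fun k _ => hterm k
  have hApos : 0 < A := by positivity
  refine ⟨A, hApos, ?_⟩
  intro t ht htT
  obtain ⟨k₀, hk₀⟩ := Finite.exists_max t
  have hAk : 2 * B k₀ / T ≤ A := by
    have := Finset.single_le_sum (f := fun k => 2 * B k / T)
      (fun k _ => hterm k) (Finset.mem_univ k₀)
    linarith
  have hS : (⨆ i, t i) = t k₀ :=
    le_antisymm (ciSup_le hk₀) (le_ciSup (Finite.bddAbove_range t) k₀)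
  set M : ℝ := t k₀ with hMdef
  have hMT : M ≤ T := htT k₀
  have hM0 : M < 0 := lt_of_le_of_lt hMT hT
  set lam : ℝ := T / (2 * M) with hlam
  have hlam0 : 0 < lam := div_pos_of_neg_of_neg hT (by linarith)
  have hlam1 : lam ≤ 1 / 2 := by
    rw [hlam, div_le_iff_of_neg (by linarith : 2 * M < 0)]
    linarith
  have h1lam : (0:ℝ) < 1 - lam := by linarith
  set r : Fin n → ℝ := fun i => if i = k₀ then T / (2 * (1 - lam)) else t i with hr
  have hrneg : r ∈ negOrth n := by
    intro i
    rw [hr]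
    by_cases hi : i = k₀
    · simp only [hi, if_pos rfl]
      exact div_neg_of_neg_of_pos hT (by linarith)
    · simp only [if_neg hi]; exact ht i
  have hseq : lam • t + (1 - lam) • r = fun i => if i = k₀ then T else t i := by
    funext i
    simp only [Pi.add_apply, Pi.smul_apply, smul_eq_mul, hr]
    by_cases hi : i = k₀
    · subst hi
      rw [if_pos rfl, if_pos rfl]
      have h8 : (1 - lam) * (T / (2 * (1 - lam))) = T / 2 := by
        field_simp
      rw [h8, ← hMdef, hlam]
      have hMne : M ≠ 0 := hM0.ne
      field_simp
      ring
    · simp only [if_neg hi]; ring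
  have hsneg : (fun i => if i = k₀ then T else t i) ∈ negOrth n := by
    intro i; by_cases hi : i = k₀ <;> simp [hi, hT, ht i]
  have key : m k₀ ≤ (lam : EReal) * h t := by
    have h1 : m k₀ ≤ h (fun i => if i = k₀ then T else t i) :=
      sInf_le ⟨_, ⟨hsneg, by simp⟩, rfl⟩
    have h2 : h (fun i => if i = k₀ then T else t i) ≤
        (lam : EReal) * h t + ((1 - lam : ℝ) : EReal) * h r := by
      rw [← hseq]
      exact hconv t ht r hrneg lam (1 - lam) hlam0.le (by linarith) (by ring)
    have h3 : ((1 - lam : ℝ) : EReal) * h r ≤ 0 := by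
      calc ((1 - lam : ℝ) : EReal) * h r ≤ ((1 - lam : ℝ) : EReal) * 0 :=
        mul_le_mul_of_nonneg_left (hnonpos r hrneg) (by exact_mod_cast h1lam.le)
      _ = 0 := mul_zero _
    calc m k₀ ≤ (lam : EReal) * h t + ((1 - lam : ℝ) : EReal) * h r := h1.trans h2
    _ ≤ (lam : EReal) * h t + 0 := add_le_add le_rfl h3
    _ = (lam : EReal) * h t := add_zero _
  have hbot : h t ≠ ⊥ := by
    intro hb
    rw [hb, EReal.mul_bot_of_pos (by exact_mod_cast hlam0)] at key
    exact hmbot k₀ (le_bot_iff.mp key)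
  have htop : h t ≠ ⊤ := ne_top_of_le_ne_top (by simp) (hnonpos t ht)
  set x : ℝ := (h t).toReal with hx
  have hxeq : ((x : ℝ) : EReal) = h t := EReal.coe_toReal htop hbot
  have keyR : B k₀ ≤ lam * x := by
    have : ((B k₀ : ℝ) : EReal) ≤ ((lam * x : ℝ) : EReal) := by
      rw [EReal.coe_mul, hxeq]
      calc ((B k₀ : ℝ) : EReal) = m k₀ := EReal.coe_toReal (hmtop k₀) (hmbot k₀)
      _ ≤ (lam : EReal) * h t := key
    exact_mod_cast this
  rw [← hxeq, EReal.coe_le_coe_iff, hS]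
  -- real arithmetic: from B k₀ ≤ (T/(2M)) * x, 2*B k₀/T ≤ A, M ≤ T < 0, derive A*M ≤ x
  have key2 : T * x ≤ 2 * M * B k₀ := by
    have h4 : (2 * M) * (lam * x) ≤ (2 * M) * B k₀ :=
      mul_le_mul_of_nonpos_left keyR (by linarith)
    have h2Mne : (2 * M) ≠ 0 := (by linarith : 2 * M < 0).ne
    have h5 : (2 * M) * (lam * x) = T * x := by
      rw [hlam]; field_simp [h2Mne]; rw [mul_assoc]; exact mul_div_cancel_left₀ _ hM0.ne
    linarith [h4, h5.symm.le, h5.le]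
  have hAB : A * T ≤ 2 * B k₀ := by
    have h6 : A * T ≤ (2 * B k₀ / T) * T :=
      mul_le_mul_of_nonpos_right hAk hT.le
    have h7 : (2 * B k₀ / T) * T = 2 * B k₀ := div_mul_cancel₀ _ hT.ne
    exact h7 ▸ h6
  nlinarith [mul_le_mul_of_nonpos_right hAB hM0.le, key2, hT, hM0]
end

section
/- Let Ω ⊆ ℂⁿ be open, x ∈ Ω, m ≥ 1, and C₁, C₂ > 0. Let u, v : Ω → [−∞, ∞), assume u is bounded above on some neighborhood of x, and assume: (i) u(z) − C₁/m ≤ v(z) for all z ∈ Ω; and (ii) v(z) ≤ sup_{ζ ∈ D_ρ(z)} u(ζ) + m^{−1} log( C₂ / (ρ₁⋯ρ_n) ) whenever ρ ∈ (0,∞)ⁿ and the closed polydisk \bar{D}_ρ(z) is contained in Ω. For a ∈ (0,∞)ⁿ and w : Ω → [−∞, ∞) set N(w, a) = limsup_{r → −∞} r^{−1} · sup{ w(z) : |z_k − x_k| ≤ e^{r a_k}, 1 ≤ k ≤ n }. Then for every a ∈ (0,∞)ⁿ: N(v, a) ≤ N(u, a) ≤ N(v, a) + m^{−1}(a₁ +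 ⋯ + a_n). (This is the Remark following Theorem 2 of the paper: for a plurisubharmonic u and its Demailly approximations u_m, the estimates of Theorem 2 give ν(u_m, x, a) ≤ ν(u, x, a) ≤ ν(u_m, x, a) + m^{−1} Σ_j a_j for the directional Lelong numbers, which are exactly the quantities N(·, a).) -/
open Set Filter

/-- The open polydisk `D_ρ(z) = {ζ : |ζ_k − z_k| < ρ_k, 1 ≤ k ≤ n}`. -/
def polydisk {n : ℕ} (z : Fin n → ℂ) (ρ : Fin n → ℝ) : Set (Fin n → ℂ) :=
  {ζ | ∀ k, ‖ζ k - z k‖ < ρ k}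

/-- The closed polydisk `{ζ : |ζ_k − z_k| ≤ ρ_k, 1 ≤ k ≤ n}`, i.e. the closure
of `D_ρ(z)` for `ρ ∈ (0,∞)ⁿ`. -/
def closedPolydisk {n : ℕ} (z : Fin n → ℂ) (ρ : Fin n → ℝ) : Set (Fin n → ℂ) :=
  {ζ | ∀ k, ‖ζ k - z k‖ ≤ ρ k}

/-- The directional Lelong-number-type quantity
`N(w, a) = limsup_{r → −∞} r⁻¹ · sup{ w(z) : z ∈ Ω, |z_k − x_k| ≤ e^{r a_k} }`. -/
noncomputable def dirN {n : ℕ} (Ω : Set (Fin n → ℂ)) (x : Fin n → ℂ)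
    (w : (Fin n → ℂ) → EReal) (a : Fin n → ℝ) : EReal :=
  limsup (fun r : ℝ =>
    ((r⁻¹ : ℝ) : EReal) *
      sSup (w '' (closedPolydisk x (fun k => Real.exp (r * a k)) ∩ Ω))) atBot

noncomputable def SS {n : ℕ} (Ω : Set (Fin n → ℂ)) (x : Fin n → ℂ)
    (w : (Fin n → ℂ) → EReal) (a : Fin n → ℝ) (r : ℝ) : EReal :=
  sSup (w '' (closedPolydisk x (fun k => Real.exp (r * a k)) ∩ Ω))

lemma dirN_eq {n : ℕ} (Ω : Set (Fin n → ℂ)) (x : Fin n → ℂ)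
    (w : (Fin n → ℂ) → EReal) (a : Fin n → ℝ) :
    dirN Ω x w a = limsup (fun r : ℝ => ((r⁻¹ : ℝ) : EReal) * SS Ω x w a r) atBot := rfl

lemma aux_le_add {X Y : EReal} {A : ℝ}
    (h : ∀ b : ℝ, Y < (b : EReal) → X ≤ (b : EReal) + (A : EReal)) :
    X ≤ Y + (A : EReal) := by
  rw [← EReal.le_of_forall_lt_iff_le]
  intro z hz
  have hY : Y < ((z - A : ℝ) : EReal) := by
    induction Y using EReal.rec with
    | bot => exact bot_lt_iff_ne_bot.2 (EReal.coe_ne_bot _)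
    | coe y =>
        have : (y : EReal) + (A : EReal) < (z : EReal) := hz
        rw [← EReal.coe_add, EReal.coe_lt_coe_iff] at this
        exact_mod_cast (by linarith : y < z - A)
    | top => simp [EReal.top_add_coe] at hz
  have := h _ hY
  rwa [← EReal.coe_add, sub_add_cancel] at this

lemma aux_limsup_le {f : ℝ → EReal} {g : ℝ → ℝ} {c : ℝ}
    (h : ∀ᶠ r in atBot, f r ≤ ((g r : ℝ) : EReal))
    (hg : Tendsto g atBot (nhds c)) : limsup f atBot ≤ (c : EReal) := by
  have h2 : Tendsto (fun r => ((g r : ℝ) : EReal)) atBot (nhds (c : EReal)) :=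
    EReal.tendsto_coe.2 hg
  calc limsup f atBot ≤ limsup (fun r => ((g r : ℝ) : EReal)) atBot := limsup_le_limsup h
    _ = (c : EReal) := h2.limsup_eq

lemma aux_ball {n : ℕ} (x : Fin n → ℂ) (ρ : Fin n → ℝ) {δ : ℝ} (hδ : 0 ≤ δ)
    (h : ∀ k, ρ k ≤ δ) : closedPolydisk x ρ ⊆ Metric.closedBall x δ := by
  intro z hz
  rw [Metric.mem_closedBall, dist_pi_le_iff hδ]
  intro k
  rw [Complex.dist_eq]
  exact (hz k).trans (h k)

lemma aux_cpoly_sub {n : ℕ} {x z : Fin n → ℂ} {σ ρ τ : Fin n → ℝ}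
    (hz : z ∈ closedPolydisk x σ) (h : ∀ k, σ k + ρ k ≤ τ k) :
    closedPolydisk z ρ ⊆ closedPolydisk x τ := by
  intro ζ hζ k
  calc ‖ζ k - x k‖ ≤ ‖ζ k - z k‖ + ‖z k - x k‖ :=
        norm_sub_le_norm_sub_add_norm_sub _ _ _
    _ ≤ ρ k + σ k := add_le_add (hζ k) (hz k)
    _ ≤ τ k := by linarith [h k]

lemma aux_poly_sub_closed {n : ℕ} {z : Fin n → ℂ} {ρ : Fin n → ℝ} :
    polydisk z ρ ⊆ closedPolydisk z ρ := fun _ hζ k => (hζ k).le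

lemma aux_inv_atBot : Tendsto (fun r : ℝ => r⁻¹) atBot (nhds 0) := by
  have h1 : Tendsto (fun r : ℝ => -r) atBot atTop := tendsto_neg_atBot_atTop
  have h2 : Tendsto (fun r : ℝ => r⁻¹) atTop (nhds 0) := tendsto_inv_atTop_zero
  have h3 : Tendsto (fun r : ℝ => (-r)⁻¹) atBot (nhds 0) := h2.comp h1
  have h : Tendsto (fun r : ℝ => -(-r)⁻¹) atBot (nhds (-0)) := h3.neg
  rw [neg_zero] at h
  refine h.congr fun r => ?_
  rw [inv_neg, neg_neg]

lemma core1 (Su Sv : ℝ → EReal) (c : ℝ)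
    (hSureal : ∀ᶠ r in atBot, ∃ y : ℝ, Su r = (y : EReal))
    (hlowS : ∀ᶠ r in atBot, Su r ≤ Sv r + (c : EReal)) :
    limsup (fun r => ((r⁻¹ : ℝ) : EReal) * Sv r) atBot ≤
      limsup (fun r => ((r⁻¹ : ℝ) : EReal) * Su r) atBot := by
  rw [← EReal.le_of_forall_lt_iff_le]
  intro b hb
  have hev := eventually_lt_of_limsup_lt hb
  have hg : Tendsto (fun r : ℝ => b - r⁻¹ * c) atBot (nhds b) := by
    have := (aux_inv_atBot.mul_const c).const_sub b
    simpa using this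
  refine aux_limsup_le ?_ hg
  filter_upwards [hSureal, hlowS, hev, eventually_lt_atBot (0:ℝ)] with r hy hle hlt hr
  obtain ⟨y, hy⟩ := hy
  rw [hy] at hlt hle
  have hrne : r ≠ 0 := ne_of_lt hr
  have hrinv : r⁻¹ < 0 := inv_lt_zero.2 hr
  have h1 : r⁻¹ * y < b := by
    rw [← EReal.coe_mul, EReal.coe_lt_coe_iff] at hlt; exact hlt
  have h2 : r * b < y := by
    rw [mul_comm]
    exact (div_lt_iff_of_neg hr).1 (by rwa [inv_mul_eq_div] at h1)
  have h3 : ((y - c : ℝ) : EReal) ≤ Sv r := by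
    rw [EReal.coe_sub]
    exact (EReal.sub_le_iff_le_add (.inl (EReal.coe_ne_bot c))
      (.inl (EReal.coe_ne_top c))).2 hle
  by_cases htop : Sv r = ⊤
  · rw [htop, EReal.coe_mul_top_of_neg hrinv]; exact bot_le
  · have hbot' : Sv r ≠ ⊥ := by
      intro h
      rw [h, EReal.bot_add, le_bot_iff] at hle
      exact EReal.coe_ne_bot y hle
    have hw : Sv r = ((Sv r).toReal : EReal) := (EReal.coe_toReal htop hbot').symm
    set w := (Sv r).toReal
    rw [hw] at h3 ⊢
    have hyw : y - c ≤ w := EReal.coe_le_coe_iff.1 h3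
    rw [← EReal.coe_mul, EReal.coe_le_coe_iff]
    have hwb : r * b - c ≤ w := by linarith
    have h4 : r⁻¹ * w ≤ r⁻¹ * (r * b - c) := mul_le_mul_of_nonpos_left hwb hrinv.le
    have h5 : r⁻¹ * (r * b - c) = b - r⁻¹ * c := by field_simp <;> ring
    linarith

lemma core2 (Su Sv : ℝ → EReal) (s A : ℝ) (e : ℝ → ℝ)
    (hSureal : ∀ᶠ r in atBot, ∃ y : ℝ, Su r = (y : EReal))
    (he : Tendsto (fun r => r⁻¹ * e r) atBot (nhds (-A)))
    (key : ∀ᶠ r in atBot, Sv (r - s) ≤ Su r + ((e r : ℝ) : EReal)) :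
    limsup (fun r => ((r⁻¹ : ℝ) : EReal) * Su r) atBot ≤
      limsup (fun r => ((r⁻¹ : ℝ) : EReal) * Sv r) atBot + (A : EReal) := by
  apply aux_le_add
  intro b hb
  have hshift : Tendsto (fun r : ℝ => r - s) atBot atBot := by
    have h : Tendsto (fun r : ℝ => r + (-s)) atBot atBot :=
      tendsto_atBot_add_const_right atBot (-s) tendsto_id
    simpa [sub_eq_add_neg] using h
  have hev : ∀ᶠ r in atBot, (((r - s)⁻¹ : ℝ) : EReal) * Sv (r - s) < (b : EReal) :=
    hshift.eventually (eventually_lt_of_limsup_lt hb)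
  have hg : Tendsto (fun r : ℝ => r⁻¹ * ((r - s) * b - e r)) atBot (nhds (b + A)) := by
    have h1 : Tendsto (fun r : ℝ => (1 - r⁻¹ * s) * b - r⁻¹ * e r) atBot (nhds (b + A)) := by
      have h2 := (((aux_inv_atBot.mul_const s).const_sub 1).mul_const b).sub he
      simpa using h2
    refine Tendsto.congr' ?_ h1
    filter_upwards [eventually_lt_atBot (0:ℝ)] with r hr
    have hrne : r ≠ 0 := ne_of_lt hr
    field_simp
  have hpt : ∀ᶠ r in atBot,
      ((r⁻¹ : ℝ) : EReal) * Su r ≤ ((r⁻¹ * ((r - s) * b - e r) : ℝ) : EReal) := by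
    filter_upwards [hSureal, key, hev, eventually_lt_atBot (0:ℝ),
      hshift.eventually (eventually_lt_atBot (0:ℝ))] with r hy hk hlt hr hrs
    obtain ⟨y, hy⟩ := hy
    have hrsinv : (r - s)⁻¹ < 0 := inv_lt_zero.2 hrs
    by_cases hsv : Sv (r - s) = ⊥
    · rw [hsv, EReal.coe_mul_bot_of_neg hrsinv] at hlt
      exact absurd hlt not_top_lt
    by_cases hsv2 : Sv (r - s) = ⊤
    · rw [hsv2, hy, ← EReal.coe_add] at hk
      exact absurd (top_le_iff.1 hk) (EReal.coe_ne_top _)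
    have hw : Sv (r - s) = ((Sv (r - s)).toReal : EReal) := (EReal.coe_toReal hsv2 hsv).symm
    set w := (Sv (r - s)).toReal
    rw [hw] at hlt hk
    rw [hy] at hk ⊢
    have h1 : (r - s)⁻¹ * w < b := by
      rw [← EReal.coe_mul, EReal.coe_lt_coe_iff] at hlt; exact hlt
    have h2 : (r - s) * b < w := by
      rw [mul_comm]
      exact (div_lt_iff_of_neg hrs).1 (by rwa [inv_mul_eq_div] at h1)
    have h3 : w ≤ y + e r := by
      rw [← EReal.coe_add, EReal.coe_le_coe_iff] at hk; exact hk
    have h4 : (r - s) * b - e r ≤ y := by linarith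
    rw [← EReal.coe_mul, EReal.coe_le_coe_iff]
    exact mul_le_mul_of_nonpos_left h4 (inv_lt_zero.2 hr).le
  have := aux_limsup_le hpt hg
  rwa [EReal.coe_add] at this


/-- Remark after Theorem 2: if `v` satisfies the two-sided Demailly estimates
with respect to `u` (as the approximations `u_m` do), then the directional
Lelong numbers satisfy `N(v,a) ≤ N(u,a) ≤ N(v,a) + m⁻¹ Σ_j a_j`. -/
theorem dirN_approx_estimates (n : ℕ) (hn : 1 ≤ n)
    (Ω : Set (Fin n → ℂ)) (hΩ : IsOpen Ω) (x : Fin n → ℂ) (hx : x ∈ Ω)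
    (m : ℝ) (hm : 1 ≤ m) (C₁ C₂ : ℝ) (hC₁ : 0 < C₁) (hC₂ : 0 < C₂)
    (u v : (Fin n → ℂ) → EReal)
    (hbdd : ∃ M : ℝ, ∃ V ∈ nhds x, ∀ z ∈ V, u z ≤ (M : EReal))
    (hlow : ∀ z ∈ Ω, u z - ((C₁ / m : ℝ) : EReal) ≤ v z)
    (hupp : ∀ z ∈ Ω, ∀ ρ : Fin n → ℝ, (∀ k, 0 < ρ k) →
      closedPolydisk z ρ ⊆ Ω →
        v z ≤ sSup (u '' polydisk z ρ) +
          ((m⁻¹ * Real.log (C₂ / ∏ i, ρ i) : ℝ) : EReal)) :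
    ∀ a : Fin n → ℝ, (∀ i, 0 < a i) →
      dirN Ω x v a ≤ dirN Ω x u a ∧
      dirN Ω x u a ≤ dirN Ω x v a + ((m⁻¹ * ∑ i, a i : ℝ) : EReal) := by
  intro a ha
  haveI : Nonempty (Fin n) := ⟨⟨0, hn⟩⟩
  have hm0 : (0:ℝ) < m := lt_of_lt_of_le one_pos hm
  obtain ⟨M, V, hV, hM⟩ := hbdd
  obtain ⟨ε₁, hε₁pos, hε₁⟩ := Metric.isOpen_iff.1 hΩ x hx
  obtain ⟨ε₂, hε₂pos, hε₂⟩ := Metric.mem_nhds_iff.1 hV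
  set δ : ℝ := min ε₁ ε₂ / 2 with hδdef
  have hδpos : 0 < δ := by positivity
  have hδlt₁ : δ < ε₁ := by
    have h1 := min_le_left ε₁ ε₂
    have h2 : 0 < min ε₁ ε₂ := lt_min hε₁pos hε₂pos
    rw [hδdef]; linarith
  have hδlt₂ : δ < ε₂ := by
    have h1 := min_le_right ε₁ ε₂
    have h2 : 0 < min ε₁ ε₂ := lt_min hε₁pos hε₂pos
    rw [hδdef]; linarith
  have hδΩ : Metric.closedBall x δ ⊆ Ω :=
    (Metric.closedBall_subset_ball hδlt₁).trans hε₁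
  have hδV : Metric.closedBall x δ ⊆ V :=
    (Metric.closedBall_subset_ball hδlt₂).trans hε₂
  have hbase : ∀ᶠ r : ℝ in atBot, ∀ k, Real.exp (r * a k) ≤ δ := by
    rw [eventually_all]
    intro k
    have h1 : Tendsto (fun r : ℝ => Real.exp (r * a k)) atBot (nhds 0) :=
      Real.tendsto_exp_atBot.comp (Tendsto.atBot_mul_const (ha k) tendsto_id)
    exact h1.eventually (eventually_le_nhds hδpos)
  have hΩK : ∀ᶠ r : ℝ in atBot,
      closedPolydisk x (fun k => Real.exp (r * a k)) ⊆ Ω :=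
    hbase.mono fun r hr => (aux_ball x _ hδpos.le hr).trans hδΩ
  have hMK : ∀ᶠ r : ℝ in atBot,
      ∀ z ∈ closedPolydisk x (fun k => Real.exp (r * a k)), u z ≤ (M : EReal) :=
    hbase.mono fun r hr z hz => hM z (hδV (aux_ball x _ hδpos.le hr hz))
  by_cases hb : ∀ᶠ r : ℝ in atBot, SS Ω x u a r = ⊥
  · -- degenerate case : u ≡ ⊥ near x
    have hNu : dirN Ω x u a = ⊤ := by
      rw [dirN_eq]
      have hcongr : limsup (fun r : ℝ => ((r⁻¹ : ℝ) : EReal) * SS Ω x u a r) atBot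
          = limsup (fun _ : ℝ => (⊤ : EReal)) atBot := by
        apply limsup_congr
        filter_upwards [hb, eventually_lt_atBot (0:ℝ)] with r h1 h2
        rw [h1, EReal.coe_mul_bot_of_neg (inv_lt_zero.2 h2)]
      rw [hcongr, limsup_const]
    obtain ⟨r₀, hr₀bot, hr₀Ω⟩ := (hb.and hΩK).exists
    have hub : ∀ z ∈ closedPolydisk x (fun k => Real.exp (r₀ * a k)) ∩ Ω, u z = ⊥ := by
      intro z hz
      have h1 : u z ≤ SS Ω x u a r₀ := le_sSup (mem_image_of_mem u hz)
      rw [hr₀bot] at h1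
      exact le_bot_iff.1 h1
    have hsmall2 : ∀ᶠ r : ℝ in atBot,
        ∀ k, Real.exp (r * a k) ≤ Real.exp (r₀ * a k) / 2 := by
      rw [eventually_all]
      intro k
      have h1 : Tendsto (fun r : ℝ => Real.exp (r * a k)) atBot (nhds 0) :=
        Real.tendsto_exp_atBot.comp (Tendsto.atBot_mul_const (ha k) tendsto_id)
      exact h1.eventually (eventually_le_nhds (by positivity))
    have hSvbot : ∀ᶠ r : ℝ in atBot, SS Ω x v a r = ⊥ := by
      filter_upwards [hsmall2] with r hr
      apply le_bot_iff.1
      apply sSup_le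
      rintro w ⟨z, hz, rfl⟩
      have hsubz : closedPolydisk z (fun k => Real.exp (r * a k)) ⊆
          closedPolydisk x (fun k => Real.exp (r₀ * a k)) :=
        aux_cpoly_sub hz.1 (fun k => by have := hr k; linarith)
      have hsubΩ : closedPolydisk z (fun k => Real.exp (r * a k)) ⊆ Ω :=
        hsubz.trans hr₀Ω
      have h2 := hupp z hz.2 _ (fun k => Real.exp_pos _) hsubΩ
      have h3 : sSup (u '' polydisk z (fun k => Real.exp (r * a k))) ≤ (⊥ : EReal) := by
        apply sSup_le
        rintro w' ⟨ζ, hζ, rfl⟩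
        exact le_of_eq (hub ζ ⟨hsubz (aux_poly_sub_closed hζ), hsubΩ (aux_poly_sub_closed hζ)⟩)
      calc v z ≤ sSup (u '' polydisk z (fun k => Real.exp (r * a k))) +
            ((m⁻¹ * Real.log (C₂ / ∏ i, Real.exp (r * a i)) : ℝ) : EReal) := h2
        _ ≤ (⊥ : EReal) + ((m⁻¹ * Real.log (C₂ / ∏ i, Real.exp (r * a i)) : ℝ) : EReal) :=
            add_le_add h3 le_rfl
        _ = ⊥ := EReal.bot_add _
    have hNv : dirN Ω x v a = ⊤ := by
      rw [dirN_eq]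
      have hcongr : limsup (fun r : ℝ => ((r⁻¹ : ℝ) : EReal) * SS Ω x v a r) atBot
          = limsup (fun _ : ℝ => (⊤ : EReal)) atBot := by
        apply limsup_congr
        filter_upwards [hSvbot, eventually_lt_atBot (0:ℝ)] with r h1 h2
        rw [h1, EReal.coe_mul_bot_of_neg (inv_lt_zero.2 h2)]
      rw [hcongr, limsup_const]
    constructor
    · rw [hNu, hNv]
    · rw [hNu, hNv, EReal.top_add_coe]
  · -- main case
    have hfreq : ∃ᶠ r in atBot, ¬ SS Ω x u a r = ⊥ := not_eventually.1 hb
    have hmono : Monotone (SS Ω x u a) := fun r r' hrr =>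
      sSup_le_sSup (image_mono (f := u) (fun z hz =>
        ⟨fun k => (hz.1 k).trans
          (Real.exp_le_exp.2 (mul_le_mul_of_nonneg_right hrr (ha k).le)), hz.2⟩))
    have hSune : ∀ r, SS Ω x u a r ≠ ⊥ := by
      intro r
      obtain ⟨r', hr'le, hr'⟩ := frequently_atBot.1 hfreq r
      intro h
      exact hr' (le_bot_iff.1 (h ▸ hmono hr'le))
    have hSuM : ∀ᶠ r in atBot, SS Ω x u a r ≤ (M : EReal) := by
      filter_upwards [hMK] with r h
      apply sSup_le
      rintro w ⟨z, hz, rfl⟩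
      exact h z hz.1
    have hSureal : ∀ᶠ r in atBot, ∃ y : ℝ, SS Ω x u a r = (y : EReal) := by
      filter_upwards [hSuM] with r h
      exact ⟨_, (EReal.coe_toReal (ne_top_of_le_ne_top (EReal.coe_ne_top M) h) (hSune r)).symm⟩
    have hlowS : ∀ᶠ r in atBot, SS Ω x u a r ≤ SS Ω x v a r + ((C₁ / m : ℝ) : EReal) := by
      apply Eventually.of_forall
      intro r
      apply sSup_le
      rintro w ⟨z, hz, rfl⟩
      have h1 : u z ≤ v z + ((C₁ / m : ℝ) : EReal) :=
        (EReal.sub_le_iff_le_add (.inl (EReal.coe_ne_bot _)) (.inl (EReal.coe_ne_top _))).1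
          (hlow z hz.2)
      exact h1.trans (add_le_add (le_sSup (mem_image_of_mem v hz)) le_rfl)
    constructor
    · rw [dirN_eq, dirN_eq]
      exact core1 (SS Ω x u a) (SS Ω x v a) (C₁ / m) hSureal hlowS
    · -- second inequality
      have hne : (Finset.univ : Finset (Fin n)).Nonempty := Finset.univ_nonempty
      set amin := Finset.univ.inf' hne a with hamin_def
      have haminpos : 0 < amin := (Finset.lt_inf'_iff hne).2 fun i _ => ha i
      set s := Real.log 2 / amin with hs_def
      have hspos : 0 < s := div_pos (Real.log_pos one_lt_two) haminpos
      have hsk : ∀ k, Real.log 2 ≤ s * a k := by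
        intro k
        have h1 : s * amin = Real.log 2 := div_mul_cancel₀ _ (ne_of_gt haminpos)
        have h2 : amin ≤ a k := Finset.inf'_le a (Finset.mem_univ k)
        nlinarith
      set T := ∑ i, a i with hT_def
      have he : Tendsto (fun r : ℝ => r⁻¹ * (m⁻¹ * (Real.log C₂ - (r - s) * T)))
          atBot (nhds (-(m⁻¹ * T))) := by
        have t1 : Tendsto (fun r : ℝ => r⁻¹ * Real.log C₂) atBot
            (nhds (0 * Real.log C₂)) := aux_inv_atBot.mul_const _
        have t2 : Tendsto (fun r : ℝ => 1 - r⁻¹ * s) atBot (nhds (1 - 0 * s)) :=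
          (aux_inv_atBot.mul_const s).const_sub 1
        have t3 : Tendsto (fun r : ℝ => (1 - r⁻¹ * s) * T) atBot (nhds ((1 - 0 * s) * T)) :=
          t2.mul_const T
        have t4 : Tendsto (fun r : ℝ => r⁻¹ * Real.log C₂ - (1 - r⁻¹ * s) * T) atBot
            (nhds (0 * Real.log C₂ - (1 - 0 * s) * T)) := t1.sub t3
        have h2 : Tendsto (fun r : ℝ => m⁻¹ * (r⁻¹ * Real.log C₂ - (1 - r⁻¹ * s) * T)) atBot
            (nhds (m⁻¹ * (0 * Real.log C₂ - (1 - 0 * s) * T))) := t4.const_mul m⁻¹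
        have hval : m⁻¹ * (0 * Real.log C₂ - (1 - 0 * s) * T) = -(m⁻¹ * T) := by ring
        rw [hval] at h2
        apply Tendsto.congr' ?_ h2
        filter_upwards [eventually_lt_atBot (0:ℝ)] with r hr
        have hrne : r ≠ 0 := ne_of_lt hr
        have hinv : r⁻¹ * (r - s) = 1 - r⁻¹ * s := by
          rw [mul_sub, inv_mul_cancel₀ hrne]
        show m⁻¹ * (r⁻¹ * Real.log C₂ - (1 - r⁻¹ * s) * T) =
          r⁻¹ * (m⁻¹ * (Real.log C₂ - (r - s) * T))
        rw [← hinv]; ring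
      have key : ∀ᶠ r in atBot, SS Ω x v a (r - s) ≤ SS Ω x u a r +
          ((m⁻¹ * (Real.log C₂ - (r - s) * T) : ℝ) : EReal) := by
        filter_upwards [hΩK] with r hΩr
        apply sSup_le
        rintro w ⟨z, hz, rfl⟩
        have hdouble : ∀ k, Real.exp ((r - s) * a k) + Real.exp ((r - s) * a k) ≤
            Real.exp (r * a k) := by
          intro k
          have h1 : Real.exp ((r - s) * a k) * 2 ≤ Real.exp (r * a k) := by
            rw [show (2:ℝ) = Real.exp (Real.log 2) from (Real.exp_log two_pos).symm,
              ← Real.exp_add]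
            apply Real.exp_le_exp.2
            have h2 := hsk k
            nlinarith
          linarith
        have hsubz : closedPolydisk z (fun k => Real.exp ((r - s) * a k)) ⊆
            closedPolydisk x (fun k => Real.exp (r * a k)) := aux_cpoly_sub hz.1 hdouble
        have hsubΩ : closedPolydisk z (fun k => Real.exp ((r - s) * a k)) ⊆ Ω :=
          hsubz.trans hΩr
        have h2 := hupp z hz.2 _ (fun k => Real.exp_pos _) hsubΩ
        have hconst : m⁻¹ * Real.log (C₂ / ∏ i, Real.exp ((r - s) * a i)) =
            m⁻¹ * (Real.log C₂ - (r - s) * T) := by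
          rw [← Real.exp_sum, show ∑ i, (r - s) * a i = (r - s) * T from
            (Finset.mul_sum _ _ _).symm,
            Real.log_div (ne_of_gt hC₂) (Real.exp_ne_zero _), Real.log_exp]
        have hsubK : polydisk z (fun k => Real.exp ((r - s) * a k)) ⊆
            closedPolydisk x (fun k => Real.exp (r * a k)) ∩ Ω :=
          fun ζ hζ => ⟨hsubz (aux_poly_sub_closed hζ), hsubΩ (aux_poly_sub_closed hζ)⟩
        calc v z ≤ sSup (u '' polydisk z (fun k => Real.exp ((r - s) * a k))) +
              ((m⁻¹ * Real.log (C₂ / ∏ i, Real.exp ((r - s) * a i)) : ℝ) : EReal) := h2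
          _ ≤ SS Ω x u a r + ((m⁻¹ * (Real.log C₂ - (r - s) * T) : ℝ) : EReal) :=
              add_le_add (sSup_le_sSup (image_mono (f := u) hsubK)) (le_of_eq (by rw [hconst]))
      rw [dirN_eq, dirN_eq]
      exact core2 (SS Ω x u a) (SS Ω x v a) s (m⁻¹ * T)
        (fun r => m⁻¹ * (Real.log C₂ - (r - s) * T)) hSureal he key
end
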